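/- Let X and Y be random variables with values in a measurable space 𝒳, whose distributions have densities f_X(x) = C_X · g_X(f(x)) and f_Y(x) = C_Y · g_Y(f(x)) with respect to a common reference measure μ, where g_X, g_Y : ℝ → ℝ are positive measurable functions, f : 𝒳 → ℝ is measurable, and C_X, C_Y ∈ ℝ are normalising constants. If g_X/g_Y is monotone increasing, then for every t ∈ ℝ, P(f(X) > t) ≥ P(f(Y) > t). -/

import Mathlib

open MeasureTheory

/-- Let `X`, `Y` be random variables with laws given by densities
`x ↦ C_X · g_X(f x)` and `x ↦ C_Y · g_Y(f x)` with respect to a common reference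
measure `μ`, where `g_X, g_Y` are positive measurable functions on `ℝ`. If
`g_X / g_Y` is monotone increasing, then `P(f(X) > t) ≥ P(f(Y) > t)` for all `t`. -/
theorem stmt11 {α : Type*} [MeasurableSpace α] (μ : Measure α)
    (gX gY : ℝ → ℝ) (hgX : Measurable gX) (hgY : Measurable gY)
    (hgXpos : ∀ s, 0 < gX s) (hgYpos : ∀ s, 0 < gY s)
    (f : α → ℝ) (hf : Measurable f) (CX CY : ℝ)
    (hX : μ.withDensity (fun x => ENNReal.ofReal (CX * gX (f x))) Set.univ = 1)
    (hY : μ.withDensity (fun x => ENNReal.ofReal (CY * gY (f x))) Set.univ = 1)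
    (hmono : Monotone fun s => gX s / gY s) :
    ∀ t : ℝ,
      μ.withDensity (fun x => ENNReal.ofReal (CY * gY (f x))) {x | t < f x}
        ≤ μ.withDensity (fun x => ENNReal.ofReal (CX * gX (f x))) {x | t < f x} := by
  intro t
  have hCX : 0 < CX := by
    by_contra h
    push_neg at h
    have hz : (fun x => ENNReal.ofReal (CX * gX (f x))) = fun _ => (0 : ENNReal) := by
      funext x
      rw [ENNReal.ofReal_eq_zero]
      exact mul_nonpos_iff.mpr (Or.inr ⟨h, (hgXpos (f x)).le⟩)
    rw [hz] at hX
    simp at hX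
  have hCY : 0 < CY := by
    by_contra h
    push_neg at h
    have hz : (fun x => ENNReal.ofReal (CY * gY (f x))) = fun _ => (0 : ENNReal) := by
      funext x
      rw [ENNReal.ofReal_eq_zero]
      exact mul_nonpos_iff.mpr (Or.inr ⟨h, (hgYpos (f x)).le⟩)
    rw [hz] at hY
    simp at hY
  set A : Set α := {x | t < f x} with hA
  have hAm : MeasurableSet A := measurableSet_lt measurable_const hf
  set lam : ℝ := CX * gX t / (CY * gY t) with hlam
  have hlampos : 0 < lam := by
    apply div_pos (mul_pos hCX (hgXpos t)) (mul_pos hCY (hgYpos t))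
  set L : ENNReal := ENNReal.ofReal lam with hL
  set dX : α → ENNReal := fun x => ENNReal.ofReal (CX * gX (f x)) with hdX
  set dY : α → ENNReal := fun x => ENNReal.ofReal (CY * gY (f x)) with hdY
  have hdXm : Measurable dX := (measurable_const.mul (hgX.comp hf)).ennreal_ofReal
  have hdYm : Measurable dY := (measurable_const.mul (hgY.comp hf)).ennreal_ofReal
  -- real key inequalities
  have keyA : ∀ s : ℝ, t ≤ s → lam * (CY * gY s) ≤ CX * gX s := by
    intro s hs
    have hr := hmono hs
    simp only at hr
    rw [div_le_div_iff₀ (hgYpos t) (hgYpos s)] at hr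
    rw [hlam, div_mul_eq_mul_div, div_le_iff₀ (mul_pos hCY (hgYpos t))]
    nlinarith [mul_le_mul_of_nonneg_left hr (mul_pos hCX hCY).le]
  have keyC : ∀ s : ℝ, s ≤ t → CX * gX s ≤ lam * (CY * gY s) := by
    intro s hs
    have hr := hmono hs
    simp only at hr
    rw [div_le_div_iff₀ (hgYpos s) (hgYpos t)] at hr
    rw [hlam, div_mul_eq_mul_div, le_div_iff₀ (mul_pos hCY (hgYpos t))]
    nlinarith [mul_le_mul_of_nonneg_left hr (mul_pos hCX hCY).le]
  -- measure inequality on A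
  have hIneqA : L * μ.withDensity dY A ≤ μ.withDensity dX A := by
    rw [withDensity_apply _ hAm, withDensity_apply _ hAm, ← lintegral_const_mul L hdYm]
    refine setLIntegral_mono hdXm (fun x hx => ?_)
    have : L * dY x = ENNReal.ofReal (lam * (CY * gY (f x))) := by
      rw [ENNReal.ofReal_mul hlampos.le]
    rw [this]
    exact ENNReal.ofReal_le_ofReal (keyA (f x) (le_of_lt hx))
  have hIneqC : μ.withDensity dX Aᶜ ≤ L * μ.withDensity dY Aᶜ := by
    rw [withDensity_apply _ hAm.compl, withDensity_apply _ hAm.compl,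
      ← lintegral_const_mul L hdYm]
    refine setLIntegral_mono (hdYm.const_mul L) (fun x hx => ?_)
    have : L * dY x = ENNReal.ofReal (lam * (CY * gY (f x))) := by
      rw [ENNReal.ofReal_mul hlampos.le]
    rw [this]
    refine ENNReal.ofReal_le_ofReal (keyC (f x) ?_)
    simpa [A] using hx
  rcases le_or_gt 1 lam with hc | hc
  · calc μ.withDensity dY A = 1 * μ.withDensity dY A := (one_mul _).symm
      _ ≤ L * μ.withDensity dY A := by
          refine mul_le_mul_left ?_ _
          rw [hL]
          exact ENNReal.one_le_ofReal.mpr hc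
      _ ≤ μ.withDensity dX A := hIneqA
  · have hL1 : L ≤ 1 := by
      rw [hL]
      exact ENNReal.ofReal_le_one.mpr hc.le
    have h2 : μ.withDensity dX Aᶜ ≤ μ.withDensity dY Aᶜ :=
      hIneqC.trans (by simpa using mul_le_mul_left hL1 (μ.withDensity dY Aᶜ))
    have htotX : μ.withDensity dX A + μ.withDensity dX Aᶜ = 1 := by
      rw [measure_add_measure_compl hAm]; exact hX
    have htotY : μ.withDensity dY A + μ.withDensity dY Aᶜ = 1 := by
      rw [measure_add_measure_compl hAm]; exact hY
    have hfin : μ.withDensity dY Aᶜ ≠ ⊤ := by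
      intro hcontra
      rw [hcontra] at htotY
      simp at htotY
    rw [← ENNReal.add_le_add_iff_right hfin]
    calc μ.withDensity dY A + μ.withDensity dY Aᶜ = 1 := htotY
      _ = μ.withDensity dX A + μ.withDensity dX Aᶜ := htotX.symm
      _ ≤ μ.withDensity dX A + μ.withDensity dY Aᶜ := add_le_add_right h2 _
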